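/- Let S : [0,1] → ℝ be a continuous function. For integers K, R ≥ 1 and an R×R complex matrix M, define Ψ_{K,R}(M) = ∫_0^1 S(ν) ( a_R(ν)^H M a_R(ν) ) d_K(ν) d_K(ν)^H dν. Then: (1) for every R×R matrix M, ‖Ψ_{K,R}(M)‖ ≤ ( sup_{ν∈[0,1]} |S(ν)| ) ‖M‖, where ‖·‖ denotes the spectral norm; and (2) if inf_{ν∈[0,1]} S(ν) > 0 and M is Hermitian positive definite, then Ψ_{K,R}(M) is Hermitian positive definite. -/

import Mathlib

open MeasureTheory Matrix Complex
open scoped ComplexOrder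

/-- The spectral (operator) norm of a complex square matrix. -/
noncomputable def specNorm {n : ℕ} (A : Matrix (Fin n) (Fin n) ℂ) : ℝ :=
  ‖Matrix.toEuclideanCLM (𝕜 := ℂ) A‖

/-- The Fourier vector `d_R(ν) = (1, e^{2πiν}, …, e^{2πi(R−1)ν})ᵀ`. -/
noncomputable def dvec (R : ℕ) (ν : ℝ) : Fin R → ℂ :=
  fun j => Complex.exp (2 * (Real.pi : ℂ) * Complex.I * ((j : ℕ) : ℂ) * (ν : ℂ))

/-- The normalized Fourier vector `a_R(ν) = d_R(ν)/√R`. -/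
noncomputable def avec (R : ℕ) (ν : ℝ) : Fin R → ℂ :=
  ((1 / Real.sqrt R : ℝ) : ℂ) • dvec R ν

/-- Entrywise (Bochner) integral over `[0,1]` of a matrix-valued function. -/
noncomputable def mInt {m n : ℕ} (f : ℝ → Matrix (Fin m) (Fin n) ℂ) :
    Matrix (Fin m) (Fin n) ℂ :=
  Matrix.of fun i j => ∫ ν in Set.Icc (0 : ℝ) 1, f ν i j

/-- The Toeplitzification operator
`Ψ_{K,R}(M) = ∫₀¹ S(ν) (a_R(ν)ᴴ M a_R(ν)) d_K(ν) d_K(ν)ᴴ dν`. -/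
noncomputable def Psi (S : ℝ → ℝ) (K R : ℕ) (M : Matrix (Fin R) (Fin R) ℂ) :
    Matrix (Fin K) (Fin K) ℂ :=
  mInt fun ν =>
    ((S ν : ℂ) * (star (avec R ν) ⬝ᵥ M.mulVec (avec R ν))) •
      Matrix.vecMulVec (dvec K ν) (star (dvec K ν))

lemma int_exp (n : ℤ) :
    (∫ ν in Set.Icc (0:ℝ) 1, Complex.exp (2 * Real.pi * Complex.I * n * ν))
      = if n = 0 then 1 else 0 := by
  rw [MeasureTheory.integral_Icc_eq_integral_Ioc, ← intervalIntegral.integral_of_le zero_le_one]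
  by_cases h : n = 0
  · simp [h]
  · have hc : (2 * (Real.pi:ℂ) * Complex.I * n) ≠ 0 := by
      simp [Real.pi_ne_zero, Complex.I_ne_zero, h]
    rw [if_neg h, integral_exp_mul_complex hc]
    have h1 : Complex.exp (2 * (Real.pi:ℂ) * Complex.I * n * 1) = 1 := by
      rw [mul_one, show (2 * (Real.pi:ℂ) * Complex.I * n) = n * (2 * Real.pi * Complex.I) by ring]
      exact Complex.exp_int_mul_two_pi_mul_I n
    push_cast
    rw [h1, mul_zero, Complex.exp_zero, sub_self, zero_div]

lemma dvec_mul_conj (K : ℕ) (i j : Fin K) (ν : ℝ) :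
    dvec K ν i * (starRingEnd ℂ) (dvec K ν j)
      = Complex.exp (2 * Real.pi * Complex.I * (((i:ℤ) - (j:ℤ)) : ℤ) * ν) := by
  unfold dvec
  rw [← Complex.exp_conj, ← Complex.exp_add]
  congr 1
  simp only [_root_.map_mul, Complex.conj_I, Complex.conj_ofReal, map_ofNat, map_natCast]
  push_cast
  ring

lemma norm_dvec_apply (K : ℕ) (i : Fin K) (ν : ℝ) : ‖dvec K ν i‖ = 1 := by
  unfold dvec
  rw [Complex.norm_exp]
  norm_num [Complex.mul_re, Complex.mul_im]

lemma cont_dvec (K : ℕ) (i : Fin K) : Continuous fun ν : ℝ => dvec K ν i := by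
  unfold dvec
  exact Complex.continuous_exp.comp (continuous_const.mul Complex.continuous_ofReal)

lemma int_dvec (K : ℕ) (i j : Fin K) :
    (∫ ν in Set.Icc (0:ℝ) 1, dvec K ν i * (starRingEnd ℂ) (dvec K ν j))
      = if i = j then 1 else 0 := by
  have : (fun ν : ℝ => dvec K ν i * (starRingEnd ℂ) (dvec K ν j))
      = fun ν : ℝ => Complex.exp (2 * Real.pi * Complex.I * (((i:ℤ) - (j:ℤ)) : ℤ) * ν) := by
    funext ν; exact dvec_mul_conj K i j ν
  rw [this, int_exp ((i:ℤ) - (j:ℤ))]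
  congr 1
  simp [sub_eq_zero, Fin.ext_iff]

noncomputable def gf (K : ℕ) (x : Fin K → ℂ) (ν : ℝ) : ℂ := star (dvec K ν) ⬝ᵥ x

noncomputable def qf (R : ℕ) (M : Matrix (Fin R) (Fin R) ℂ) (ν : ℝ) : ℂ :=
  star (avec R ν) ⬝ᵥ M.mulVec (avec R ν)

lemma cont_avec (R : ℕ) (i : Fin R) : Continuous fun ν : ℝ => avec R ν i := by
  unfold avec
  exact continuous_const.mul (cont_dvec R i)

lemma cont_gf (K : ℕ) (x : Fin K → ℂ) : Continuous (gf K x) := by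
  unfold gf dotProduct
  refine continuous_finset_sum _ fun i _ => ?_
  exact ((cont_dvec K i).star).mul continuous_const

lemma cont_qf (R : ℕ) (M : Matrix (Fin R) (Fin R) ℂ) : Continuous (qf R M) := by
  unfold qf dotProduct Matrix.mulVec
  refine continuous_finset_sum _ fun i _ => ?_
  refine ((cont_avec R i).star).mul ?_
  exact continuous_finset_sum _ fun j _ => continuous_const.mul (cont_avec R j)

lemma Psi_apply (S : ℝ → ℝ) (K R : ℕ) (M : Matrix (Fin R) (Fin R) ℂ) (i j : Fin K) :
    Psi S K R M i j = ∫ ν in Set.Icc (0:ℝ) 1,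
      ((S ν : ℂ) * qf R M ν) * (dvec K ν i * (starRingEnd ℂ) (dvec K ν j)) := rfl

lemma contOn_coeS (S : ℝ → ℝ) (hS : ContinuousOn S (Set.Icc (0:ℝ) 1)) :
    ContinuousOn (fun ν => ((S ν : ℝ) : ℂ)) (Set.Icc (0:ℝ) 1) :=
  Complex.continuous_ofReal.comp_continuousOn hS

lemma integrableOn_entry (S : ℝ → ℝ) (hS : ContinuousOn S (Set.Icc (0:ℝ) 1))
    (K R : ℕ) (M : Matrix (Fin R) (Fin R) ℂ) (i j : Fin K) :
    IntegrableOn (fun ν => ((S ν : ℂ) * qf R M ν) *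
      (dvec K ν i * (starRingEnd ℂ) (dvec K ν j))) (Set.Icc (0:ℝ) 1) := by
  refine ContinuousOn.integrableOn_compact isCompact_Icc ?_
  exact (((contOn_coeS S hS).mul (cont_qf R M).continuousOn).mul
    (((cont_dvec K i).mul ((cont_dvec K j).star)).continuousOn))

lemma gf_conj (K : ℕ) (y : Fin K → ℂ) (ν : ℝ) :
    (starRingEnd ℂ) (gf K y ν) = ∑ i, dvec K ν i * (starRingEnd ℂ) (y i) := by
  unfold gf dotProduct
  rw [map_sum]
  refine Finset.sum_congr rfl fun i _ => ?_
  simp [mul_comm]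

lemma integrable_dd (K : ℕ) (i j : Fin K) (c : ℂ) :
    IntegrableOn (fun ν => (dvec K ν i * (starRingEnd ℂ) (dvec K ν j)) * c)
      (Set.Icc (0:ℝ) 1) := by
  refine ContinuousOn.integrableOn_compact isCompact_Icc ?_
  exact ((cont_dvec K i).mul ((cont_dvec K j).star)).continuousOn.mul continuousOn_const

lemma gram (K : ℕ) (x y : Fin K → ℂ) :
    (∫ ν in Set.Icc (0:ℝ) 1, (starRingEnd ℂ) (gf K y ν) * gf K x ν) = star y ⬝ᵥ x := by
  have hpt : ∀ ν : ℝ, (starRingEnd ℂ) (gf K y ν) * gf K x ν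
      = ∑ i, ∑ j, (dvec K ν i * (starRingEnd ℂ) (dvec K ν j)) *
          ((starRingEnd ℂ) (y i) * x j) := by
    intro ν
    rw [gf_conj]
    unfold gf dotProduct
    rw [Finset.sum_mul_sum]
    refine Finset.sum_congr rfl fun i _ => Finset.sum_congr rfl fun j _ => ?_
    simp only [Pi.star_apply, RCLike.star_def]
    ring
  simp only [hpt]
  rw [MeasureTheory.integral_finset_sum]
  · have : ∀ i : Fin K, (∫ ν in Set.Icc (0:ℝ) 1, ∑ j, (dvec K ν i * (starRingEnd ℂ) (dvec K ν j)) *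
          ((starRingEnd ℂ) (y i) * x j))
        = ∑ j, (if i = j then (1:ℂ) else 0) * ((starRingEnd ℂ) (y i) * x j) := by
      intro i
      rw [MeasureTheory.integral_finset_sum]
      · exact Finset.sum_congr rfl fun j _ => by
          rw [MeasureTheory.integral_mul_const, int_dvec]
      · intro j _
        exact integrable_dd K i j _
    simp only [this]
    simp [Finset.sum_ite_eq, dotProduct]
  · intro i _
    exact MeasureTheory.integrable_finset_sum _ fun j _ => integrable_dd K i j _

lemma psi_bilin (S : ℝ → ℝ) (hS : ContinuousOn S (Set.Icc (0:ℝ) 1))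
    (K R : ℕ) (M : Matrix (Fin R) (Fin R) ℂ) (x y : Fin K → ℂ) :
    star y ⬝ᵥ (Psi S K R M).mulVec x
      = ∫ ν in Set.Icc (0:ℝ) 1,
          ((S ν : ℂ) * qf R M ν) * ((starRingEnd ℂ) (gf K y ν) * gf K x ν) := by
  have hint : ∀ (i j : Fin K) (c : ℂ), IntegrableOn
      (fun ν => (((S ν : ℂ) * qf R M ν) * (dvec K ν i * (starRingEnd ℂ) (dvec K ν j))) * c)
      (Set.Icc (0:ℝ) 1) := fun i j c => (integrableOn_entry S hS K R M i j).mul_const c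
  have h1 : ∀ i, (Psi S K R M).mulVec x i
      = ∫ ν in Set.Icc (0:ℝ) 1,
          ∑ j, (((S ν : ℂ) * qf R M ν) * (dvec K ν i * (starRingEnd ℂ) (dvec K ν j))) * x j := by
    intro i
    rw [MeasureTheory.integral_finset_sum _ (fun j _ => hint i j (x j))]
    unfold Matrix.mulVec dotProduct
    exact Finset.sum_congr rfl fun j _ => by
      rw [show (fun j => Psi S K R M i j) j = Psi S K R M i j from rfl,
        Psi_apply, MeasureTheory.integral_mul_const]
  unfold dotProduct
  simp only [h1, Pi.star_apply, RCLike.star_def]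
  have h2 : ∀ i : Fin K, (starRingEnd ℂ) (y i) * (∫ ν in Set.Icc (0:ℝ) 1,
        ∑ j, (((S ν : ℂ) * qf R M ν) * (dvec K ν i * (starRingEnd ℂ) (dvec K ν j))) * x j)
      = ∫ ν in Set.Icc (0:ℝ) 1, (starRingEnd ℂ) (y i) *
          ∑ j, (((S ν : ℂ) * qf R M ν) * (dvec K ν i * (starRingEnd ℂ) (dvec K ν j))) * x j := by
    intro i
    rw [MeasureTheory.integral_const_mul]
  simp only [h2]
  rw [← MeasureTheory.integral_finset_sum]
  · refine MeasureTheory.setIntegral_congr_fun measurableSet_Icc fun ν _ => ?_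
    rw [gf_conj]
    unfold gf dotProduct
    simp only [Pi.star_apply, RCLike.star_def]
    rw [Finset.sum_mul_sum, Finset.mul_sum]
    refine Finset.sum_congr rfl fun i _ => ?_
    rw [Finset.mul_sum, Finset.mul_sum]
    exact Finset.sum_congr rfl fun j _ => by ring
  · intro i _
    exact (MeasureTheory.integrable_finset_sum _ (fun j _ => hint i j (x j))).const_mul _

noncomputable def eN (K : ℕ) (x : Fin K → ℂ) : ℝ := ‖(WithLp.equiv 2 (Fin K → ℂ)).symm x‖

lemma eN_nonneg (K : ℕ) (x : Fin K → ℂ) : 0 ≤ eN K x := norm_nonneg _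

lemma eN_eq_zero {K : ℕ} {x : Fin K → ℂ} (h : eN K x = 0) : x = 0 := by
  have := norm_eq_zero.mp h
  have := congrArg (WithLp.equiv 2 (Fin K → ℂ)) this
  simpa using this

lemma star_dot_self (K : ℕ) (x : Fin K → ℂ) : star x ⬝ᵥ x = ((eN K x : ℝ) : ℂ) ^ 2 := by
  have := inner_self_eq_norm_sq_to_K (𝕜 := ℂ) ((WithLp.equiv 2 (Fin K → ℂ)).symm x)
  rw [dotProduct_comm]
  exact this

lemma int_gf_sq (K : ℕ) (x : Fin K → ℂ) :
    (∫ ν in Set.Icc (0:ℝ) 1, (‖gf K x ν‖)^2) = eN K x ^ 2 := by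
  have h1 : (∫ ν in Set.Icc (0:ℝ) 1, (((‖gf K x ν‖)^2 : ℝ) : ℂ))
      = (((eN K x ^ 2 : ℝ)) : ℂ) := by
    have hpt : ∀ ν : ℝ, (((‖gf K x ν‖)^2 : ℝ) : ℂ)
        = (starRingEnd ℂ) (gf K x ν) * gf K x ν := by
      intro ν
      rw [mul_comm, Complex.mul_conj]
      norm_cast
      exact Complex.sq_norm _
    simp only [hpt]
    rw [gram K x x, star_dot_self]
    push_cast
    ring
  exact Complex.ofReal_injective ((integral_ofReal (𝕜 := ℂ)).symm.trans h1)

lemma cont_abs_gf (K : ℕ) (x : Fin K → ℂ) :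
    Continuous fun ν => ‖gf K x ν‖ :=
  continuous_norm.comp (cont_gf K x)

lemma integrable_gf_sq (K : ℕ) (x : Fin K → ℂ) :
    IntegrableOn (fun ν => (‖gf K x ν‖)^2) (Set.Icc (0:ℝ) 1) :=
  (((cont_abs_gf K x).pow 2).continuousOn).integrableOn_compact isCompact_Icc

lemma key_CS (K : ℕ) (x y : Fin K → ℂ) :
    (∫ ν in Set.Icc (0:ℝ) 1, ‖gf K y ν‖ * ‖gf K x ν‖)
      ≤ eN K y * eN K x := by
  by_cases hx : eN K x = 0
  · have hx0 : x = 0 := eN_eq_zero hx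
    have : ∀ ν : ℝ, gf K x ν = 0 := by intro ν; simp [hx0, gf]
    simp [this, hx]
  by_cases hy : eN K y = 0
  · have hy0 : y = 0 := eN_eq_zero hy
    have : ∀ ν : ℝ, gf K y ν = 0 := by intro ν; simp [hy0, gf]
    simp [this, hy]
  have hxp : 0 < eN K x := lt_of_le_of_ne (eN_nonneg K x) (Ne.symm hx)
  have hyp : 0 < eN K y := lt_of_le_of_ne (eN_nonneg K y) (Ne.symm hy)
  set t : ℝ := eN K x / eN K y with ht
  have htp : 0 < t := div_pos hxp hyp
  have hbound : ∀ ν : ℝ, ‖gf K y ν‖ * ‖gf K x ν‖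
      ≤ t/2 * (‖gf K y ν‖)^2 + 1/(2*t) * (‖gf K x ν‖)^2 := by
    intro ν
    set A := ‖gf K y ν‖
    set B := ‖gf K x ν‖
    have h2 := sq_nonneg (t * A - B)
    have hu : t * (1/(2*t)) = 1/2 := by field_simp
    have h3 : t * (A * B) ≤ t * (t/2 * A^2 + 1/(2*t) * B^2) := by nlinarith [h2, hu]
    exact le_of_mul_le_mul_left h3 htp
  have hIle := MeasureTheory.setIntegral_mono_on
    (((cont_abs_gf K y).mul (cont_abs_gf K x)).continuousOn.integrableOn_compact isCompact_Icc)
    (((integrable_gf_sq K y).const_mul (t/2)).add ((integrable_gf_sq K x).const_mul (1/(2*t))))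
    measurableSet_Icc (fun ν _ => hbound ν)
  simp only [Pi.add_apply] at hIle
  refine hIle.trans ?_
  rw [MeasureTheory.integral_add ((integrable_gf_sq K y).const_mul (t/2))
      ((integrable_gf_sq K x).const_mul (1/(2*t))),
    MeasureTheory.integral_const_mul, MeasureTheory.integral_const_mul,
    int_gf_sq, int_gf_sq]
  refine le_of_eq ?_
  rw [ht]
  field_simp
  ring

lemma specNorm_nonneg {n : ℕ} (A : Matrix (Fin n) (Fin n) ℂ) : 0 ≤ specNorm A :=
  norm_nonneg _

lemma eN_avec (R : ℕ) (hR : 1 ≤ R) (ν : ℝ) : eN R (avec R ν) = 1 := by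
  unfold eN
  rw [EuclideanSpace.norm_eq]
  have hcomp : ∀ i : Fin R, ‖(WithLp.equiv 2 (Fin R → ℂ)).symm (avec R ν) i‖
      = 1 / Real.sqrt R := by
    intro i
    have : (WithLp.equiv 2 (Fin R → ℂ)).symm (avec R ν) i = avec R ν i := rfl
    rw [this]
    unfold avec
    simp only [Pi.smul_apply, smul_eq_mul, norm_mul, Complex.norm_real]
    rw [show ‖dvec R ν i‖ = ‖dvec R ν i‖ from rfl, norm_dvec_apply, mul_one,
      Real.norm_eq_abs]
    exact abs_of_nonneg (by positivity)
  simp only [hcomp]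
  have hR0 : (0:ℝ) < R := by exact_mod_cast hR
  rw [Finset.sum_const, Finset.card_univ, Fintype.card_fin]
  rw [div_pow, one_pow, Real.sq_sqrt hR0.le]
  rw [nsmul_eq_mul, mul_one_div, div_self (ne_of_gt hR0), Real.sqrt_one]

lemma qf_bound (R : ℕ) (hR : 1 ≤ R) (M : Matrix (Fin R) (Fin R) ℂ) (ν : ℝ) :
    ‖qf R M ν‖ ≤ specNorm M := by
  set a' := (WithLp.equiv 2 (Fin R → ℂ)).symm (avec R ν) with ha'
  have hq : qf R M ν = inner (𝕜 := ℂ) a' ((Matrix.toEuclideanCLM (𝕜 := ℂ) M) a') := by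
    rw [ha']
    exact dotProduct_comm _ _
  have hna : ‖a'‖ = 1 := eN_avec R hR ν
  rw [hq]
  calc ‖inner (𝕜 := ℂ) a' ((Matrix.toEuclideanCLM (𝕜 := ℂ) M) a')‖
      ≤ ‖a'‖ * ‖(Matrix.toEuclideanCLM (𝕜 := ℂ) M) a'‖ := norm_inner_le_norm _ _
    _ ≤ ‖a'‖ * (‖Matrix.toEuclideanCLM (𝕜 := ℂ) M‖ * ‖a'‖) :=
        mul_le_mul_of_nonneg_left (ContinuousLinearMap.le_opNorm _ _) (norm_nonneg _)
    _ = specNorm M := by rw [hna, one_mul, mul_one]; rfl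

lemma part1 (S : ℝ → ℝ) (hS : ContinuousOn S (Set.Icc (0:ℝ) 1))
    (K R : ℕ) (hK : 1 ≤ K) (hR : 1 ≤ R) (M : Matrix (Fin R) (Fin R) ℂ) :
    specNorm (Psi S K R M) ≤ (⨆ ν : Set.Icc (0 : ℝ) 1, |S (ν : ℝ)|) * specNorm M := by
  set C1 := ⨆ ν : Set.Icc (0 : ℝ) 1, |S (ν : ℝ)| with hC1
  have hbdd : BddAbove (Set.range fun ν : Set.Icc (0:ℝ) 1 => |S (ν : ℝ)|) := by
    have h := (isCompact_Icc (a := (0:ℝ)) (b := 1)).bddAbove_image hS.abs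
    rwa [Set.image_eq_range] at h
  have hC1le : ∀ ν ∈ Set.Icc (0:ℝ) 1, |S ν| ≤ C1 := fun ν hν => le_ciSup hbdd ⟨ν, hν⟩
  have hC1nonneg : 0 ≤ C1 :=
    le_trans (abs_nonneg (S 0)) (hC1le 0 ⟨le_refl 0, zero_le_one⟩)
  unfold specNorm
  refine ContinuousLinearMap.opNorm_le_bound (Matrix.toEuclideanCLM (𝕜 := ℂ) (Psi S K R M))
    (mul_nonneg hC1nonneg (specNorm_nonneg M)) fun x' => ?_
  set xv : Fin K → ℂ := WithLp.equiv 2 (Fin K → ℂ) x' with hxv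
  set y' := (Matrix.toEuclideanCLM (𝕜 := ℂ) (Psi S K R M)) x' with hy'
  set yv : Fin K → ℂ := WithLp.equiv 2 (Fin K → ℂ) y' with hyv
  have hmv : (Psi S K R M).mulVec xv = yv := by
    rw [hyv, hy']; rfl
  have heNy : eN K yv = ‖y'‖ := by unfold eN; rw [hyv]; simp
  have heNx : eN K xv = ‖x'‖ := by unfold eN; rw [hxv]; simp
  have hsq : (‖y'‖:ℝ)^2 = ‖star yv ⬝ᵥ (Psi S K R M).mulVec xv‖ := by
    rw [hmv, star_dot_self, heNy]
    rw [← Complex.ofReal_pow, Complex.norm_real, Real.norm_eq_abs]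
    exact (_root_.abs_of_nonneg (by positivity)).symm
  have hchain : ‖star yv ⬝ᵥ (Psi S K R M).mulVec xv‖
      ≤ C1 * specNorm M * (‖y'‖ * ‖x'‖) := by
    rw [psi_bilin S hS K R M xv yv]
    calc ‖∫ ν in Set.Icc (0:ℝ) 1,
          ((S ν : ℂ) * qf R M ν) * ((starRingEnd ℂ) (gf K yv ν) * gf K xv ν)‖
        ≤ ∫ ν in Set.Icc (0:ℝ) 1, ‖((S ν : ℂ) * qf R M ν) * ((starRingEnd ℂ) (gf K yv ν) * gf K xv ν)‖ :=
          by
            exact norm_integral_le_integral_norm _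
      _ ≤ ∫ ν in Set.Icc (0:ℝ) 1,
            C1 * specNorm M * (‖gf K yv ν‖ * ‖gf K xv ν‖) := by
          refine MeasureTheory.setIntegral_mono_on ?_ ?_ measurableSet_Icc ?_
          · refine ContinuousOn.integrableOn_compact isCompact_Icc ?_
            exact continuous_norm.comp_continuousOn
              (((contOn_coeS S hS).mul (cont_qf R M).continuousOn).mul
                (((cont_gf K yv).star.mul (cont_gf K xv)).continuousOn))
          · refine ContinuousOn.integrableOn_compact isCompact_Icc ?_
            exact (continuousOn_const.mul
              (((cont_abs_gf K yv).mul (cont_abs_gf K xv)).continuousOn))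
          · intro ν hν
            rw [norm_mul, norm_mul, norm_mul, Complex.norm_real, Real.norm_eq_abs, Complex.norm_conj]
            have h1 : |S ν| ≤ C1 := hC1le ν hν
            have h2 := qf_bound R hR M ν
            have h3 : (0:ℝ) ≤ ‖gf K yv ν‖ * ‖gf K xv ν‖ := by
              positivity
            exact mul_le_mul
              (mul_le_mul h1 h2 (norm_nonneg _) hC1nonneg) le_rfl h3
              (mul_nonneg hC1nonneg (specNorm_nonneg M))
      _ ≤ C1 * specNorm M * (‖y'‖ * ‖x'‖) := by
          rw [MeasureTheory.integral_const_mul]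
          have := key_CS K xv yv
          rw [heNy, heNx] at this
          exact mul_le_mul_of_nonneg_left this (mul_nonneg hC1nonneg (specNorm_nonneg M))
  by_cases hy0 : ‖y'‖ = 0
  · rw [hy0]
    positivity
  · have hy0' : 0 < ‖y'‖ := lt_of_le_of_ne (norm_nonneg _) (Ne.symm hy0)
    have : ‖y'‖ * ‖y'‖ ≤ (C1 * specNorm M * ‖x'‖) * ‖y'‖ := by
      calc ‖y'‖ * ‖y'‖ = ‖y'‖^2 := by ring
        _ ≤ C1 * specNorm M * (‖y'‖ * ‖x'‖) := hsq.le.trans hchain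
        _ = (C1 * specNorm M * ‖x'‖) * ‖y'‖ := by ring
    exact le_of_mul_le_mul_right this hy0'

lemma part2 (S : ℝ → ℝ) (hS : ContinuousOn S (Set.Icc (0:ℝ) 1))
    (K R : ℕ) (hK : 1 ≤ K) (hR : 1 ≤ R)
    (hinf : 0 < ⨅ ν : Set.Icc (0 : ℝ) 1, S (ν : ℝ))
    (M : Matrix (Fin R) (Fin R) ℂ) (hM : M.PosDef) : (Psi S K R M).PosDef := by
  have havec : ∀ ν : ℝ, avec R ν ≠ 0 := by
    intro ν h
    have h0 : avec R ν ⟨0, hR⟩ = ((1/Real.sqrt R : ℝ) : ℂ) := by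
      unfold avec dvec
      simp
    rw [h] at h0
    have hRpos : (0:ℝ) < Real.sqrt R := Real.sqrt_pos.mpr (by exact_mod_cast hR)
    simp only [Pi.zero_apply] at h0
    have : (1/Real.sqrt R : ℝ) = 0 := by exact_mod_cast h0.symm
    rw [div_eq_zero_iff] at this
    rcases this with h1 | h1
    · exact one_ne_zero h1
    · exact hRpos.ne' h1
  have hq : ∀ ν : ℝ, 0 < qf R M ν := fun ν => (Matrix.posDef_iff_dotProduct_mulVec.mp hM).2 (havec ν)
  have hqre : ∀ ν : ℝ, 0 < (qf R M ν).re := fun ν => (Complex.lt_def.mp (hq ν)).1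
  have hqim : ∀ ν : ℝ, (qf R M ν).im = 0 := fun ν => ((Complex.lt_def.mp (hq ν)).2).symm
  have hqconj : ∀ ν : ℝ, (starRingEnd ℂ) (qf R M ν) = qf R M ν := fun ν =>
    Complex.conj_eq_iff_im.mpr (hqim ν)
  have hqofReal : ∀ ν : ℝ, (((qf R M ν).re : ℝ) : ℂ) = qf R M ν := fun ν =>
    Complex.ext (by simp) (by simp [hqim ν])
  have hherm : (Psi S K R M).IsHermitian := by
    rw [Matrix.IsHermitian]
    ext i j
    rw [Matrix.conjTranspose_apply, Psi_apply, Psi_apply, RCLike.star_def, ← integral_conj]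
    congr 1
    funext ν
    simp only [_root_.map_mul, Complex.conj_ofReal, Complex.conj_conj, hqconj ν]
    ring
  refine Matrix.posDef_iff_dotProduct_mulVec.mpr ⟨hherm, fun x hx => ?_⟩
  rw [psi_bilin S hS K R M x x]
  set u : ℝ → ℝ := fun ν => S ν * (qf R M ν).re * (‖gf K x ν‖)^2 with hu
  have hpt : ∀ ν : ℝ, ((S ν : ℂ) * qf R M ν) * ((starRingEnd ℂ) (gf K x ν) * gf K x ν)
      = ((u ν : ℝ) : ℂ) := by
    intro ν
    have hg : (starRingEnd ℂ) (gf K x ν) * gf K x ν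
        = (((‖gf K x ν‖)^2 : ℝ) : ℂ) := by
      rw [mul_comm, Complex.mul_conj]
      norm_cast
      exact (Complex.sq_norm _).symm
    rw [hg, ← hqofReal ν, hu]
    push_cast
    ring
  simp only [hpt]
  have hcast : (∫ ν in Set.Icc (0:ℝ) 1, ((u ν : ℝ) : ℂ))
      = (((∫ ν in Set.Icc (0:ℝ) 1, u ν) : ℝ) : ℂ) := integral_ofReal (𝕜 := ℂ)
  rw [hcast, Complex.zero_lt_real]
  -- now show 0 < ∫ u
  have hbddB : BddBelow (Set.range fun ν : Set.Icc (0:ℝ) 1 => S (ν : ℝ)) := by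
    have h := (isCompact_Icc (a := (0:ℝ)) (b := 1)).bddBelow_image hS
    rwa [Set.image_eq_range] at h
  set c1 := ⨅ ν : Set.Icc (0 : ℝ) 1, S (ν : ℝ) with hc1
  have hSge : ∀ ν ∈ Set.Icc (0:ℝ) 1, c1 ≤ S ν := fun ν hν => ciInf_le hbddB ⟨ν, hν⟩
  obtain ⟨ν₀, hν₀, hmin⟩ := (isCompact_Icc (a := (0:ℝ)) (b := 1)).exists_isMinOn
    (Set.nonempty_Icc.mpr zero_le_one)
    ((Complex.continuous_re.comp (cont_qf R M)).continuousOn)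
  set c2 := (qf R M ν₀).re with hc2
  have hc2pos : 0 < c2 := hqre ν₀
  have hqge : ∀ ν ∈ Set.Icc (0:ℝ) 1, c2 ≤ (qf R M ν).re := fun ν hν => hmin hν
  have heNx : 0 < eN K x := by
    rcases lt_or_eq_of_le (eN_nonneg K x) with h | h
    · exact h
    · exact absurd (eN_eq_zero h.symm) hx
  have hlow : ∀ ν ∈ Set.Icc (0:ℝ) 1,
      (c1 * c2) * (‖gf K x ν‖)^2 ≤ u ν := by
    intro ν hν
    rw [hu]
    have h1 : c1 * c2 ≤ S ν * (qf R M ν).re :=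
      mul_le_mul (hSge ν hν) (hqge ν hν) hc2pos.le (hinf.le.trans (hSge ν hν))
    exact mul_le_mul_of_nonneg_right h1 (sq_nonneg _)
  have hIu : IntegrableOn u (Set.Icc (0:ℝ) 1) := by
    refine ContinuousOn.integrableOn_compact isCompact_Icc ?_
    exact (hS.mul ((Complex.continuous_re.comp (cont_qf R M)).continuousOn)).mul
      (((cont_abs_gf K x).pow 2).continuousOn)
  have hmono := MeasureTheory.setIntegral_mono_on
    ((integrable_gf_sq K x).const_mul (c1 * c2)) hIu measurableSet_Icc hlow
  rw [MeasureTheory.integral_const_mul, int_gf_sq] at hmono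
  have : 0 < c1 * c2 * eN K x ^ 2 := by positivity
  linarith

/-- norm bound and positivity preservation for the
Toeplitzification operator. -/
theorem psi_norm_and_posdef (S : ℝ → ℝ)
    (hS : ContinuousOn S (Set.Icc (0 : ℝ) 1))
    (K R : ℕ) (hK : 1 ≤ K) (hR : 1 ≤ R) :
    (∀ M : Matrix (Fin R) (Fin R) ℂ,
        specNorm (Psi S K R M) ≤ (⨆ ν : Set.Icc (0 : ℝ) 1, |S (ν : ℝ)|) * specNorm M) ∧
      ((0 < ⨅ ν : Set.Icc (0 : ℝ) 1, S (ν : ℝ)) →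
        ∀ M : Matrix (Fin R) (Fin R) ℂ, M.PosDef → (Psi S K R M).PosDef) := by
  exact ⟨fun M => part1 S hS K R hK hR M,
    fun hinf M hM => part2 S hS K R hK hR hinf M hM⟩
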